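/- Suppose 1/2 < σ < 1. Define g(T) = ∫_{(0,∞)^p} ψ(2Tw₁, …, 2Tw_p) ρ(dw). Then g(T) = O(T^{(1+σ)/2}) as T → ∞: there exist a constant C < ∞ and T₀ > 0 such that g(T) ≤ C T^{(1+σ)/2} for all T ≥ T₀. Consequently the expected number of edges E[E_{α,T}] = (α²/2) g(T) satisfies E[E_{α,T}] = O(T^{(1+σ)/2}) as T → ∞ for any fixed α > 0. -/

import Mathlib

open MeasureTheory Real Filter

/-- The Lévy measure of a generalized gamma process: the measure on `(0,∞)` with density
`w ↦ w^(-1-σ) * exp(-τ*w) / Γ(1-σ)` with respect to Lebesgue measure. -/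
noncomputable def rho0 (σ τ : ℝ) : Measure ℝ :=
  ((volume : Measure ℝ).restrict (Set.Ioi 0)).withDensity
    (fun w => ENNReal.ofReal (w ^ (-1 - σ) * Real.exp (-τ * w) / Real.Gamma (1 - σ)))

/-- The Gamma(a,b) probability measure on `(0,∞)`, with density
`x ↦ b^a x^(a−1) e^(−b x) / Γ(a)` with respect to Lebesgue measure. -/
noncomputable def gammaM (a b : ℝ) : Measure ℝ :=
  ((volume : Measure ℝ).restrict (Set.Ioi 0)).withDensity
    (fun x => ENNReal.ofReal (b ^ a * x ^ (a - 1) * Real.exp (-b * x) / Real.Gamma a))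

/-- The multivariate Lévy measure `ρ` of the compound CRM with independent gamma scores:
the pushforward of `ρ₀ ⊗ Gamma(a₁,b₁) ⊗ ⋯ ⊗ Gamma(a_p,b_p)` under
`(w₀, β₁, …, β_p) ↦ (w₀β₁, …, w₀β_p)`. -/
noncomputable def rhoC (σ τ : ℝ) (p : ℕ) (a b : Fin p → ℝ) : Measure (Fin p → ℝ) :=
  Measure.map (fun x : ℝ × (Fin p → ℝ) => fun k => x.1 * x.2 k)
    ((rho0 σ τ).prod (Measure.pi fun k => gammaM (a k) (b k)))

/-- The Laplace exponent `ψ(t) = ∫ (1 − e^{−Σ_k t_k v_k}) ρ(dv)` of the compound CRM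
(a finite quantity, expressed here as a Bochner integral). -/
noncomputable def psi (σ τ : ℝ) (p : ℕ) (a b : Fin p → ℝ) (t : Fin p → ℝ) : ℝ :=
  ∫ v, (1 - Real.exp (-∑ k, t k * v k)) ∂(rhoC σ τ p a b)

/-- `g(T) = ∫ ψ(2Tw₁,…,2Tw_p) ρ(dw)`, so that `E[E_{α,T}] = (α²/2) g(T)`. -/
noncomputable def edgesIntegral (σ τ : ℝ) (p : ℕ) (a b : Fin p → ℝ) (T : ℝ) : ℝ :=
  ∫ w, psi σ τ p a b (fun k => 2 * T * w k) ∂(rhoC σ τ p a b)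

section ProofAux
open Set
-- elementary
lemma one_sub_exp_le_rpow {s θ : ℝ} (hs : 0 ≤ s) (hθ0 : 0 < θ) (hθ1 : θ ≤ 1) :
    1 - Real.exp (-s) ≤ s ^ θ := by
  rcases le_or_gt s 1 with h | h
  · have h1 : 1 - Real.exp (-s) ≤ s := by nlinarith [Real.add_one_le_exp (-s)]
    refine h1.trans ?_
    rcases eq_or_lt_of_le hs with h0 | h0
    · rw [← h0, Real.zero_rpow hθ0.ne']
    · calc s = s ^ (1:ℝ) := (Real.rpow_one s).symm
        _ ≤ s ^ θ := Real.rpow_le_rpow_of_exponent_ge h0 h hθ1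
  · have : (1:ℝ) ≤ s ^ θ := Real.one_le_rpow h.le hθ0.le
    nlinarith [Real.exp_pos (-s)]

lemma rpow_le_one_add {x θ : ℝ} (hx : 0 ≤ x) (hθ0 : 0 ≤ θ) (hθ1 : θ ≤ 1) :
    x ^ θ ≤ 1 + x := by
  rcases le_or_gt x 1 with h | h
  · have := Real.rpow_le_one hx h hθ0
    linarith
  · calc x ^ θ ≤ x ^ (1:ℝ) :=
        Real.rpow_le_rpow_of_exponent_le h.le hθ1
      _ = x := Real.rpow_one x
      _ ≤ 1 + x := by linarith

-- gamma-type integrability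
lemma integrableOn_rpow_exp {c t : ℝ} (hc : 0 < c) (ht : 0 < t) :
    IntegrableOn (fun x : ℝ => x ^ (c - 1) * Real.exp (-t * x)) (Set.Ioi 0) := by
  have h0 : IntegrableOn (fun x : ℝ => Real.exp (-x) * x ^ (c - 1)) (Ioi 0) :=
    Real.GammaIntegral_convergent hc
  have h1 : IntegrableOn (fun x : ℝ => Real.exp (-(t * x)) * (t * x) ^ (c - 1)) (Ioi 0) := by
    have := (integrableOn_Ioi_comp_mul_left_iff
      (fun x : ℝ => Real.exp (-x) * x ^ (c - 1)) 0 ht).2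
    simpa using this (by simpa using h0)
  have h2 := h1.const_mul ((t : ℝ) ^ (c - 1))⁻¹
  refine IntegrableOn.congr_fun (h2 : IntegrableOn _ _ _) (fun x hx => ?_) measurableSet_Ioi
  have hx0 : (0:ℝ) < x := hx
  have htne : (t:ℝ) ^ (c-1) ≠ 0 := (Real.rpow_pos_of_pos ht _).ne'
  rw [Real.mul_rpow ht.le hx0.le]
  have : -(t * x) = -t * x := by ring
  rw [this]
  field_simp

lemma rho0_meas (σ τ : ℝ) :
    Measurable (fun w : ℝ => ENNReal.ofReal (w ^ (-1 - σ) * Real.exp (-τ * w) / Real.Gamma (1 - σ))) := by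
  apply Measurable.ennreal_ofReal
  exact ((measurable_id.pow_const _).mul ((measurable_id.const_mul _).exp)).div_const _

lemma gammaM_meas (a b : ℝ) :
    Measurable (fun x : ℝ => ENNReal.ofReal (b ^ a * x ^ (a - 1) * Real.exp (-b * x) / Real.Gamma a)) := by
  apply Measurable.ennreal_ofReal
  exact (((measurable_id.pow_const _).const_mul _).mul ((measurable_id.const_mul _).exp)).div_const _

lemma integrable_rpow_rho0 {σ τ θ : ℝ} (hσ : σ < 1) (hθ : σ < θ) (hτ : 0 < τ) :
    Integrable (fun x : ℝ => x ^ θ) (rho0 σ τ) := by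
  rw [rho0, integrable_withDensity_iff (rho0_meas σ τ)
    (Eventually.of_forall fun x => ENNReal.ofReal_lt_top)]
  have hΓ : 0 < Real.Gamma (1 - σ) := Real.Gamma_pos_of_pos (by linarith)
  have base : IntegrableOn
      (fun x : ℝ => (1 / Real.Gamma (1 - σ)) * (x ^ (θ - σ - 1) * Real.exp (-τ * x)))
      (Ioi 0) :=
    (integrableOn_rpow_exp (c := θ - σ) (by linarith) hτ).const_mul _
  refine IntegrableOn.congr_fun (base : IntegrableOn _ _ _) (fun x hx => ?_) measurableSet_Ioi
  have hx0 : (0:ℝ) < x := hx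
  rw [ENNReal.toReal_ofReal (by positivity)]
  have hsplit : x ^ (θ - σ - 1) = x ^ θ * x ^ (-1 - σ) := by
    rw [← Real.rpow_add hx0]; congr 1; ring
  rw [hsplit]
  field_simp

lemma integrable_rpow_gammaM {a b θ : ℝ} (ha : 0 < a) (hb : 0 < b) (hθ : 0 ≤ θ) :
    Integrable (fun x : ℝ => x ^ θ) (gammaM a b) := by
  rw [gammaM, integrable_withDensity_iff (gammaM_meas a b)
    (Eventually.of_forall fun x => ENNReal.ofReal_lt_top)]
  have hΓ : 0 < Real.Gamma a := Real.Gamma_pos_of_pos ha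
  have hba : 0 < b ^ a := Real.rpow_pos_of_pos hb a
  have base : IntegrableOn
      (fun x : ℝ => (b ^ a / Real.Gamma a) * (x ^ (a + θ - 1) * Real.exp (-b * x)))
      (Ioi 0) :=
    (integrableOn_rpow_exp (c := a + θ) (by linarith) hb).const_mul _
  refine IntegrableOn.congr_fun (base : IntegrableOn _ _ _) (fun x hx => ?_) measurableSet_Ioi
  have hx0 : (0:ℝ) < x := hx
  rw [ENNReal.toReal_ofReal (by positivity)]
  have hsplit : x ^ (a + θ - 1) = x ^ θ * x ^ (a - 1) := by
    rw [← Real.rpow_add hx0]; congr 1; ring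
  rw [hsplit]
  field_simp

lemma gammaM_lint {a b : ℝ} (ha : 0 < a) (hb : 0 < b) :
    ∫⁻ x in Ioi 0,
      ENNReal.ofReal (b ^ a * x ^ (a - 1) * Real.exp (-b * x) / Real.Gamma a) = 1 := by
  have h1 := ProbabilityTheory.lintegral_gammaPDF_eq_one ha hb
  rw [← lintegral_add_compl (ProbabilityTheory.gammaPDF a b) measurableSet_Ioi,
    compl_Ioi] at h1
  have hIic : ∫⁻ x in Iic 0, ProbabilityTheory.gammaPDF a b x = 0 := by
    rw [setLIntegral_congr (Iio_ae_eq_Iic (a := (0:ℝ))).symm]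
    exact ProbabilityTheory.lintegral_gammaPDF_of_nonpos le_rfl
  rw [hIic, add_zero] at h1
  rw [← h1]
  refine setLIntegral_congr_fun measurableSet_Ioi (fun x hx => ?_)
  have hx0 : (0:ℝ) < x := hx
  rw [ProbabilityTheory.gammaPDF_of_nonneg hx0.le]
  congr 1
  rw [neg_mul]
  ring

lemma gammaM_apply_Ioi {a b : ℝ} (ha : 0 < a) (hb : 0 < b) : gammaM a b (Ioi 0) = 1 := by
  rw [gammaM, withDensity_apply _ measurableSet_Ioi, Measure.restrict_restrict measurableSet_Ioi,
    inter_self]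
  exact gammaM_lint ha hb

lemma gammaM_prob {a b : ℝ} (ha : 0 < a) (hb : 0 < b) : IsProbabilityMeasure (gammaM a b) := by
  constructor
  rw [gammaM, withDensity_apply _ MeasurableSet.univ, Measure.restrict_univ]
  exact gammaM_lint ha hb

lemma gammaM_compl_Ioi {a b : ℝ} (ha : 0 < a) (hb : 0 < b) : gammaM a b ((Ioi 0)ᶜ) = 0 := by
  have := gammaM_prob ha hb
  rw [prob_compl_eq_zero_iff measurableSet_Ioi]
  exact gammaM_apply_Ioi ha hb

lemma rho0_compl_Ioi (σ τ : ℝ) : rho0 σ τ ((Ioi 0)ᶜ) = 0 := by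
  rw [rho0, withDensity_apply _ measurableSet_Ioi.compl,
    Measure.restrict_restrict measurableSet_Ioi.compl, compl_inter_self,
    Measure.restrict_empty, lintegral_zero_measure]

section pi
variable {p : ℕ} {a b : Fin p → ℝ}

lemma pi_gamma_prob (ha : ∀ k, 0 < a k) (hb : ∀ k, 0 < b k) : IsProbabilityMeasure (Measure.pi fun k => gammaM (a k) (b k)) := by
  have := fun k => gammaM_prob (ha k) (hb k)
  infer_instance

lemma pi_gamma_Ioi (ha : ∀ k, 0 < a k) (hb : ∀ k, 0 < b k) : (Measure.pi fun k => gammaM (a k) (b k)) (univ.pi fun _ => Ioi 0) = 1 := by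
  have := fun k => gammaM_prob (ha k) (hb k)
  rw [Measure.pi_pi]
  simp [gammaM_apply_Ioi (ha _) (hb _)]

lemma pi_gamma_compl (ha : ∀ k, 0 < a k) (hb : ∀ k, 0 < b k) : (Measure.pi fun k => gammaM (a k) (b k)) ((univ.pi fun _ => Ioi (0:ℝ))ᶜ) = 0 := by
  have := pi_gamma_prob ha hb
  rw [prob_compl_eq_zero_iff (MeasurableSet.univ_pi fun _ => measurableSet_Ioi)]
  exact pi_gamma_Ioi ha hb

lemma map_eval_pi (ha : ∀ k, 0 < a k) (hb : ∀ k, 0 < b k) (k : Fin p) :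
    (Measure.pi fun j => gammaM (a j) (b j)).map (Function.eval k) = gammaM (a k) (b k) := by
  have := fun j => gammaM_prob (ha j) (hb j)
  refine Measure.ext fun s hs => ?_
  rw [Measure.map_apply (measurable_pi_apply k) hs, Set.eval_preimage, Measure.pi_pi]
  rw [Finset.prod_eq_single k]
  · simp
  · intro j _ hj
    simp [Function.update_of_ne hj]
  · simp

lemma integrable_eval_rpow (ha : ∀ k, 0 < a k) (hb : ∀ k, 0 < b k) {θ : ℝ} (hθ : 0 ≤ θ) (k : Fin p) :
    Integrable (fun β : Fin p → ℝ => (β k) ^ θ) (Measure.pi fun j => gammaM (a j) (b j)) := by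
  have hint : Integrable (fun x : ℝ => x ^ θ)
      ((Measure.pi fun j => gammaM (a j) (b j)).map (Function.eval k)) := by
    rw [map_eval_pi ha hb k]; exact integrable_rpow_gammaM (ha k) (hb k) hθ
  exact (integrable_map_measure (measurable_id.pow_const θ).aestronglyMeasurable
    (measurable_pi_apply k).aemeasurable).1 hint

lemma pi_gamma_ae_pos (ha : ∀ k, 0 < a k) (hb : ∀ k, 0 < b k) : ∀ᵐ β ∂(Measure.pi fun k => gammaM (a k) (b k)), ∀ k, 0 < β k := by
  have h := pi_gamma_compl ha hb
  rw [ae_iff]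
  refine measure_mono_null (fun β hβ => ?_) h
  simp only [mem_setOf_eq, not_forall] at hβ
  intro hmem
  obtain ⟨k, hk⟩ := hβ
  exact hk (hmem k (mem_univ k))

lemma integrable_sum_rpow_pi (ha : ∀ k, 0 < a k) (hb : ∀ k, 0 < b k) {θ : ℝ} (hθ0 : 0 ≤ θ) (hθ1 : θ ≤ 1) :
    Integrable (fun β : Fin p → ℝ => (∑ k, β k) ^ θ)
      (Measure.pi fun j => gammaM (a j) (b j)) := by
  have := pi_gamma_prob ha hb
  have hg : Integrable (fun β : Fin p → ℝ => 1 + ∑ k, β k)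
      (Measure.pi fun j => gammaM (a j) (b j)) := by
    refine (integrable_const 1).add (integrable_finset_sum _ fun k _ => ?_)
    have h1 : Integrable (fun β : Fin p → ℝ => (β k) ^ (1:ℝ))
        (Measure.pi fun j => gammaM (a j) (b j)) := integrable_eval_rpow ha hb zero_le_one k
    simpa [Real.rpow_one] using h1
  refine hg.mono' ?_ ?_
  · exact ((Finset.univ.measurable_sum fun k _ => measurable_pi_apply k).pow_const θ).aestronglyMeasurable
  · filter_upwards [pi_gamma_ae_pos ha hb] with β hβ
    have hsum : 0 ≤ ∑ k, β k := Finset.sum_nonneg fun k _ => (hβ k).le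
    rw [Real.norm_eq_abs, abs_of_nonneg (Real.rpow_nonneg hsum θ)]
    exact rpow_le_one_add hsum hθ0 hθ1
end pi

section main
variable {σ τ : ℝ} {p : ℕ} {a b : Fin p → ℝ}

lemma meas_F : Measurable (fun x : ℝ × (Fin p → ℝ) => fun k => x.1 * x.2 k) :=
  measurable_pi_lambda _ fun k => measurable_fst.mul ((measurable_pi_apply k).comp measurable_snd)

lemma prod_ae_pos (ha : ∀ k, 0 < a k) (hb : ∀ k, 0 < b k) :
    ∀ᵐ x ∂((rho0 σ τ).prod (Measure.pi fun k => gammaM (a k) (b k))),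
      0 < x.1 ∧ ∀ k, 0 < x.2 k := by
  have := pi_gamma_prob ha hb
  have h := Measure.measure_prod_compl_eq_zero (μ := rho0 σ τ)
    (ν := Measure.pi fun k => gammaM (a k) (b k))
    (rho0_compl_Ioi σ τ) (pi_gamma_compl ha hb)
  rw [ae_iff]
  refine measure_mono_null (fun x hx => ?_) h
  simp only [mem_setOf_eq, not_and_or, not_forall] at hx
  intro hmem
  rw [mem_prod] at hmem
  rcases hx with h1 | h2
  · exact h1 hmem.1
  · obtain ⟨k, hk⟩ := h2
    exact hk (hmem.2 k (mem_univ k))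

lemma rhoC_ae_pos (hσ : σ < 1) (hτ : 0 < τ) (ha : ∀ k, 0 < a k) (hb : ∀ k, 0 < b k) :
    ∀ᵐ v ∂(rhoC σ τ p a b), ∀ k, 0 < v k := by
  have hs : MeasurableSet {v : Fin p → ℝ | ∀ k, 0 < v k} := by
    have heq : {v : Fin p → ℝ | ∀ k, 0 < v k} = univ.pi fun _ => Ioi 0 := by
      ext v; simp [Set.mem_univ_pi, Set.mem_Ioi]
    rw [heq]; exact MeasurableSet.univ_pi fun _ => measurableSet_Ioi
  rw [rhoC]
  refine (ae_map_iff meas_F.aemeasurable hs).2 ?_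
  filter_upwards [prod_ae_pos ha hb] with x hx
  intro k
  exact mul_pos hx.1 (hx.2 k)

lemma integrable_sum_rpow (hσ : σ < 1) (hτ : 0 < τ) (ha : ∀ k, 0 < a k) (hb : ∀ k, 0 < b k)
    {θ : ℝ} (hθσ : σ < θ) (hθ0 : 0 < θ) (hθ1 : θ ≤ 1) :
    Integrable (fun v : Fin p → ℝ => (∑ k, v k) ^ θ) (rhoC σ τ p a b) := by
  have := pi_gamma_prob ha hb
  rw [rhoC, integrable_map_measure
    ((Finset.univ.measurable_sum fun k _ => measurable_pi_apply k).pow_const θ).aestronglyMeasurable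
    meas_F.aemeasurable]
  have key : Integrable (fun x : ℝ × (Fin p → ℝ) => x.1 ^ θ * (∑ k, x.2 k) ^ θ)
      ((rho0 σ τ).prod (Measure.pi fun k => gammaM (a k) (b k))) :=
    (integrable_rpow_rho0 hσ hθσ hτ).mul_prod (integrable_sum_rpow_pi ha hb hθ0.le hθ1)
  refine key.congr ?_
  filter_upwards [prod_ae_pos ha hb] with x hx
  have hsum : 0 ≤ ∑ k, x.2 k := Finset.sum_nonneg fun k _ => (hx.2 k).le
  show x.1 ^ θ * (∑ k, x.2 k) ^ θ = (∑ k, x.1 * x.2 k) ^ θ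
  rw [← Finset.mul_sum, Real.mul_rpow hx.1.le hsum]

end main

section final
variable {σ τ : ℝ} {p : ℕ} {a b : Fin p → ℝ}

lemma psi_le (hσ : σ < 1) (hτ : 0 < τ) (ha : ∀ k, 0 < a k) (hb : ∀ k, 0 < b k)
    {θ : ℝ} (hθσ : σ < θ) (hθ0 : 0 < θ) (hθ1 : θ ≤ 1)
    {t : Fin p → ℝ} (ht : ∀ k, 0 ≤ t k) :
    psi σ τ p a b t ≤ (∑ k, t k) ^ θ * ∫ v, (∑ k, v k) ^ θ ∂(rhoC σ τ p a b) := by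
  set ρ := rhoC σ τ p a b
  have hInt : Integrable (fun v : Fin p → ℝ => (∑ k, v k) ^ θ) ρ :=
    integrable_sum_rpow hσ hτ ha hb hθσ hθ0 hθ1
  have htsum : 0 ≤ ∑ k, t k := Finset.sum_nonneg fun k _ => ht k
  have hbound : ∀ᵐ v ∂ρ, 1 - Real.exp (-∑ k, t k * v k) ≤ (∑ k, t k) ^ θ * (∑ k, v k) ^ θ := by
    filter_upwards [rhoC_ae_pos hσ hτ ha hb] with v hv
    have hvsum : 0 ≤ ∑ k, v k := Finset.sum_nonneg fun k _ => (hv k).le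
    have hs0 : 0 ≤ ∑ k, t k * v k := Finset.sum_nonneg fun k _ => mul_nonneg (ht k) (hv k).le
    have h1 : 1 - Real.exp (-∑ k, t k * v k) ≤ (∑ k, t k * v k) ^ θ :=
      one_sub_exp_le_rpow hs0 hθ0 hθ1
    refine h1.trans ?_
    have h2 : (∑ k, t k * v k) ≤ (∑ k, t k) * (∑ k, v k) := by
      rw [Finset.sum_mul]
      refine Finset.sum_le_sum fun k _ => ?_
      exact mul_le_mul_of_nonneg_left
        (Finset.single_le_sum (fun j _ => (hv j).le) (Finset.mem_univ k)) (ht k)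
    calc (∑ k, t k * v k) ^ θ ≤ ((∑ k, t k) * (∑ k, v k)) ^ θ :=
          Real.rpow_le_rpow hs0 h2 hθ0.le
      _ = (∑ k, t k) ^ θ * (∑ k, v k) ^ θ := Real.mul_rpow htsum hvsum
  have hfint : Integrable (fun v : Fin p → ℝ => 1 - Real.exp (-∑ k, t k * v k)) ρ := by
    refine (hInt.const_mul ((∑ k, t k) ^ θ)).mono' ?_ ?_
    · refine (continuous_const.sub ?_).aestronglyMeasurable
      exact ((continuous_finset_sum _ fun k _ =>
        (continuous_const.mul (continuous_apply k))).neg).rexp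
    · filter_upwards [rhoC_ae_pos hσ hτ ha hb, hbound] with v hv hvb
      have hs0 : 0 ≤ ∑ k, t k * v k := Finset.sum_nonneg fun k _ => mul_nonneg (ht k) (hv k).le
      have he : Real.exp (-∑ k, t k * v k) ≤ 1 := Real.exp_le_one_iff.2 (by linarith)
      rw [Real.norm_eq_abs, abs_of_nonneg (by linarith)]
      exact hvb
  have := integral_mono_ae hfint (hInt.const_mul ((∑ k, t k) ^ θ)) hbound
  rw [integral_const_mul] at this
  exact this

/-- For `1/2 < σ < 1`, `g(T) = ∫ ψ(2Tw) ρ(dw) = O(T^{(1+σ)/2})` as `T → ∞`; consequently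
`E[E_{α,T}] = (α²/2) g(T) = O(T^{(1+σ)/2})` as `T → ∞` for any fixed `α > 0`. -/
theorem edges_growth_sigma_gt_half (σ τ : ℝ) (hσ0 : 1 / 2 < σ) (hσ : σ < 1) (hτ : 0 < τ)
    (p : ℕ) (hp : 1 ≤ p) (a b : Fin p → ℝ) (ha : ∀ k, 0 < a k) (hb : ∀ k, 0 < b k) :
    (∃ C T₀ : ℝ, 0 < T₀ ∧ ∀ T ≥ T₀,
      edgesIntegral σ τ p a b T ≤ C * T ^ ((1 + σ) / 2)) ∧
    ∀ α : ℝ, 0 < α → ∃ C' T₁ : ℝ, 0 < T₁ ∧ ∀ T ≥ T₁,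
      α ^ 2 / 2 * edgesIntegral σ τ p a b T ≤ C' * T ^ ((1 + σ) / 2) := by
  set θ := (1 + σ) / 2 with hθdef
  have hθσ : σ < θ := by rw [hθdef]; linarith
  have hθ0 : 0 < θ := by rw [hθdef]; linarith
  have hθ1 : θ ≤ 1 := by rw [hθdef]; linarith
  set ρ := rhoC σ τ p a b with hρ
  set M := ∫ v, (∑ k, v k) ^ θ ∂ρ with hM
  have hInt : Integrable (fun v : Fin p → ℝ => (∑ k, v k) ^ θ) ρ :=
    integrable_sum_rpow hσ hτ ha hb hθσ hθ0 hθ1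
  have hM0 : 0 ≤ M := by
    refine integral_nonneg_of_ae ?_
    filter_upwards [rhoC_ae_pos hσ hτ ha hb] with v hv
    exact Real.rpow_nonneg (Finset.sum_nonneg fun k _ => (hv k).le) θ
  have key : ∀ T : ℝ, 1 ≤ T →
      edgesIntegral σ τ p a b T ≤ (2 ^ θ * (M * M)) * T ^ θ := by
    intro T hT
    have hT0 : 0 < T := lt_of_lt_of_le one_pos hT
    have hae : ∀ᵐ w ∂ρ, psi σ τ p a b (fun k => 2 * T * w k)
        ≤ ((2 * T) ^ θ * M) * (∑ k, w k) ^ θ := by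
      filter_upwards [rhoC_ae_pos hσ hτ ha hb] with w hw
      have h1 := psi_le hσ hτ ha hb hθσ hθ0 hθ1
        (t := fun k => 2 * T * w k) (fun k => mul_nonneg (by linarith) (hw k).le)
      refine h1.trans (le_of_eq ?_)
      have hsum : (∑ k, 2 * T * w k) = (2 * T) * ∑ k, w k := by rw [Finset.mul_sum]
      rw [hsum, Real.mul_rpow (by linarith) (Finset.sum_nonneg fun k _ => (hw k).le)]
      ring
    have hgint : Integrable (fun w : Fin p → ℝ => ((2 * T) ^ θ * M) * (∑ k, w k) ^ θ) ρ :=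
      hInt.const_mul _
    have h2T : (2 * T) ^ θ = 2 ^ θ * T ^ θ := Real.mul_rpow (by norm_num) hT0.le
    by_cases hψ : Integrable (fun w : Fin p → ℝ => psi σ τ p a b (fun k => 2 * T * w k)) ρ
    · have hle := integral_mono_ae hψ hgint hae
      rw [integral_const_mul] at hle
      calc edgesIntegral σ τ p a b T ≤ (2 * T) ^ θ * M * M := hle
        _ = (2 ^ θ * (M * M)) * T ^ θ := by rw [h2T]; ring
    · rw [edgesIntegral, ← hρ, integral_undef hψ]
      have : (0:ℝ) ≤ 2 ^ θ * (M * M) * T ^ θ := mul_nonneg (mul_nonneg (Real.rpow_nonneg (by norm_num) θ) (mul_nonneg hM0 hM0)) (Real.rpow_nonneg hT0.le θ)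
      linarith
  constructor
  · exact ⟨2 ^ θ * (M * M), 1, one_pos, key⟩
  · intro α hα
    refine ⟨α ^ 2 / 2 * (2 ^ θ * (M * M)), 1, one_pos, fun T hT => ?_⟩
    have h := key T hT
    have h2 : α ^ 2 / 2 * edgesIntegral σ τ p a b T
        ≤ α ^ 2 / 2 * ((2 ^ θ * (M * M)) * T ^ θ) := by
      refine mul_le_mul_of_nonneg_left h (by positivity)
    calc α ^ 2 / 2 * edgesIntegral σ τ p a b T
        ≤ α ^ 2 / 2 * ((2 ^ θ * (M * M)) * T ^ θ) := h2
      _ = α ^ 2 / 2 * (2 ^ θ * (M * M)) * T ^ θ := by ring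

end final
end ProofAux
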